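/- arXiv:1808.08487 — 2 statements merged into one kernel-verified Lean document; each statement's English description precedes it below -/
import Mathlib

section
/- Let m ≥ 1 and 1 ≤ ℓ ≤ m, and let f_1, …, f_ℓ be Boolean functions from GF(2^{2m}) to GF(2). Then (f_1, …, f_ℓ) is a (2m, ℓ) bent vectorial function if and only if the binary linear code C(f_1, …, f_ℓ) has the following weight distribution: exactly 1 codeword of Hamming weight 0, exactly (2^ℓ − 1)·2^{2m} codewords of weight 2^{2m−1} − 2^{m−1}, exactly 2(2^{2m} − 1) codewords of weight 2^{2m−1}, exactly (2^ℓ − 1)·2^{2m} codewords of weight 2^{2m−1} + 2^{m−1}, exactly 1 codeword of weight 2^{2m}, and no codewords of any other weight. -/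
noncomputable section

/-- The finite field `GF(2^n)` is finite. -/
instance (n : ℕ) : Fintype (GaloisField 2 n) := Fintype.ofFinite _

/-- The absolute trace map from `GF(2^(2m))` to `GF(2)`. -/
def tr (m : ℕ) (x : GaloisField 2 (2*m)) : ZMod 2 :=
  Algebra.trace (ZMod 2) (GaloisField 2 (2*m)) x

/-- A Boolean function `f : GF(2^(2m)) → GF(2)` is bent if all its Walsh
transform values have absolute value `2^m`. -/
def IsBent (m : ℕ) (f : GaloisField 2 (2*m) → ZMod 2) : Prop :=
  ∀ w : GaloisField 2 (2*m),
    |∑ x : GaloisField 2 (2*m), (-1 : ℤ) ^ ((f x + tr m (w * x)).val)| = 2 ^ m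

/-- A tuple `(f 0, …, f (ℓ-1))` of Boolean functions on `GF(2^(2m))` is a
`(2m, ℓ)` bent vectorial function if every nonzero `GF(2)`-linear combination
of the `f j` is bent. -/
def IsBentVectorial (m ℓ : ℕ) (f : Fin ℓ → GaloisField 2 (2*m) → ZMod 2) : Prop :=
  ∀ a : Fin ℓ → ZMod 2, a ≠ 0 → IsBent m (fun x => ∑ j, a j * f j x)

/-- The binary linear code `C(f 0, …, f (ℓ-1))` of length `2^(2m)` (with
coordinates indexed by `GF(2^(2m))`, a codeword being a function
`GF(2^(2m)) → GF(2)`, i.e. the truth table of a Boolean function), spanned by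
the truth tables of the `f j`, the truth tables of the linear functions
`x ↦ tr (w * x)` for all `w`, and the all-one vector. -/
def code (m ℓ : ℕ) (f : Fin ℓ → GaloisField 2 (2*m) → ZMod 2) :
    Submodule (ZMod 2) (GaloisField 2 (2*m) → ZMod 2) :=
  Submodule.span (ZMod 2)
    (Set.range f ∪ Set.range (fun w => fun x => tr m (w * x)) ∪ {fun _ => (1 : ZMod 2)})

/-- The Hamming weight of a codeword: the number of nonzero coordinates. -/
def wt (m : ℕ) (c : GaloisField 2 (2*m) → ZMod 2) : ℕ :=
  {x | c x ≠ 0}.ncard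

/-- The support of a codeword: the set of coordinates where it is nonzero. -/
def supp (m : ℕ) (c : GaloisField 2 (2*m) → ZMod 2) : Set (GaloisField 2 (2*m)) :=
  {x | c x ≠ 0}

namespace BentAux

open Finset

set_option synthInstance.maxHeartbeats 1000000 in
instance (n : ℕ) : Algebra.IsSeparable (ZMod 2) (GaloisField 2 n) := inferInstance

set_option synthInstance.maxHeartbeats 1000000 in
instance (n : ℕ) : FiniteDimensional (ZMod 2) (GaloisField 2 n) := inferInstance

/-- the character -/
def chi (u : ZMod 2) : ℤ := (-1) ^ u.val

lemma chi_add (u v : ZMod 2) : chi (u + v) = chi u * chi v := by revert u v; decide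

lemma chi_eq (u : ZMod 2) : chi u = 1 - 2 * u.val := by revert u; decide

lemma abs_chi (u : ZMod 2) : |chi u| = 1 := by revert u; decide

lemma card_F (m : ℕ) (hm : 1 ≤ m) : Fintype.card (GaloisField 2 (2*m)) = 2^(2*m) := by
  rw [← Nat.card_eq_fintype_card]; exact GaloisField.card 2 (2*m) (by omega)

lemma tr_add (m : ℕ) (a b : GaloisField 2 (2*m)) : tr m (a + b) = tr m a + tr m b :=
  map_add _ a b

lemma tr_zero (m : ℕ) : tr m 0 = 0 := map_zero _

lemma wt_card (m : ℕ) (c : GaloisField 2 (2*m) → ZMod 2) [DecidablePred fun x => c x ≠ 0] :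
    wt m c = (univ.filter fun x => c x ≠ 0).card := by
  classical
  rw [wt, ← Set.ncard_coe_finset]
  congr 1
  ext x; simp

lemma sum_chi (m : ℕ) (c : GaloisField 2 (2*m) → ZMod 2) :
    ∑ x, chi (c x) = (Fintype.card (GaloisField 2 (2*m)) : ℤ) - 2 * wt m c := by
  classical
  have h1 : ∀ u : ZMod 2, chi u = 1 - 2 * (if u ≠ 0 then (1:ℤ) else 0) := by decide
  rw [wt_card]
  simp only [h1]
  rw [Finset.sum_sub_distrib, Finset.sum_const, Finset.card_univ, ← Finset.mul_sum,
    Finset.sum_boole]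
  ring

lemma exists_tr_one (m : ℕ) {w : GaloisField 2 (2*m)} (hw : w ≠ 0) :
    ∃ y, tr m (w * y) = 1 := by
  obtain ⟨z, hz⟩ := Algebra.trace_surjective (ZMod 2) (GaloisField 2 (2*m)) 1
  exact ⟨w⁻¹ * z, by rw [← mul_assoc, mul_inv_cancel₀ hw, one_mul]; exact hz⟩

lemma sum_chi_tr (m : ℕ) {w : GaloisField 2 (2*m)} (hw : w ≠ 0) (ε : ZMod 2) :
    ∑ x, chi (tr m (w * x) + ε) = 0 := by
  obtain ⟨y, hy⟩ := exists_tr_one m hw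
  have h : ∑ x, chi (tr m (w * x) + ε) = ∑ x, chi (tr m (w * (x + y)) + ε) :=
    (Fintype.sum_equiv (Equiv.addRight y) _ _ (fun x => rfl)).symm
  have h2 : ∀ x : GaloisField 2 (2*m), chi (tr m (w * (x + y)) + ε)
      = - chi (tr m (w * x) + ε) := by
    intro x
    rw [mul_add, tr_add, hy]
    have : tr m (w * x) + 1 + ε = (tr m (w * x) + ε) + 1 := by ring
    rw [this, chi_add]
    have : chi 1 = -1 := by decide
    rw [this]; ring
  simp only [h2] at h
  rw [Finset.sum_neg_distrib] at h
  omega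


variable {m ℓ : ℕ} (f : Fin ℓ → GaloisField 2 (2*m) → ZMod 2)

/-- the parameter space of the code -/
abbrev T (m ℓ : ℕ) := (Fin ℓ → ZMod 2) × GaloisField 2 (2*m) × ZMod 2

lemma zmod2_cases (c : ZMod 2) : c = 0 ∨ c = 1 := by revert c; decide

/-- the linear parametrization of the code -/
def PhiL (m ℓ : ℕ) (f : Fin ℓ → GaloisField 2 (2*m) → ZMod 2) :
    T m ℓ →ₗ[ZMod 2] (GaloisField 2 (2*m) → ZMod 2) where
  toFun t := fun x => (∑ j, t.1 j * f j x) + tr m (t.2.1 * x) + t.2.2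
  map_add' t t' := by
    funext x
    simp only [Prod.fst_add, Prod.snd_add, Pi.add_apply, add_mul, Finset.sum_add_distrib,
      tr_add]
    ring
  map_smul' c t := by
    rcases zmod2_cases c with hc | hc <;> subst hc
    · funext x
      simp [tr_zero]
    · funext x
      simp
  
lemma PhiL_apply (t : T m ℓ) (x : GaloisField 2 (2*m)) :
    PhiL m ℓ f t x = (∑ j, t.1 j * f j x) + tr m (t.2.1 * x) + t.2.2 := rfl

lemma PhiL_single (j : Fin ℓ) : PhiL m ℓ f (Pi.single j 1, 0, 0) = f j := by
  funext x
  rw [PhiL_apply]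
  simp [Pi.single_apply, tr_zero, Finset.sum_ite_eq']

lemma PhiL_tr (w : GaloisField 2 (2*m)) :
    PhiL m ℓ f (0, w, 0) = fun x => tr m (w * x) := by
  funext x; rw [PhiL_apply]; simp

lemma PhiL_one : PhiL m ℓ f (0, 0, 1) = fun _ => (1 : ZMod 2) := by
  funext x; rw [PhiL_apply]; simp [tr_zero]

lemma code_eq : (code m ℓ f : Set _) = Set.range (PhiL m ℓ f) := by
  have : code m ℓ f = LinearMap.range (PhiL m ℓ f) := by
    apply le_antisymm
    · rw [code, Submodule.span_le]
      rintro c ((⟨j, rfl⟩ | ⟨w, rfl⟩) | rfl)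
      · exact ⟨(Pi.single j 1, 0, 0), PhiL_single f j⟩
      · exact ⟨(0, w, 0), PhiL_tr f w⟩
      · exact ⟨(0, 0, 1), PhiL_one f⟩
    · rintro c ⟨t, rfl⟩
      have hc : PhiL m ℓ f t = (∑ j, t.1 j • f j) + (fun x => tr m (t.2.1 * x))
          + t.2.2 • (fun _ => (1 : ZMod 2)) := by
        funext x
        simp [PhiL_apply, Finset.sum_apply, smul_eq_mul]
      rw [hc]
      refine Submodule.add_mem _ (Submodule.add_mem _ ?_ ?_) ?_
      · exact Submodule.sum_mem _ fun j _ => Submodule.smul_mem _ _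
          (Submodule.subset_span (Or.inl (Or.inl ⟨j, rfl⟩)))
      · exact Submodule.subset_span (Or.inl (Or.inr ⟨t.2.1, rfl⟩))
      · exact Submodule.smul_mem _ _ (Submodule.subset_span (Or.inr rfl))
  rw [this]
  rfl

lemma wt_le (hm : 1 ≤ m) (c : GaloisField 2 (2*m) → ZMod 2) : wt m c ≤ 2^(2*m) := by
  classical
  rw [wt_card, ← card_F m hm, ← Finset.card_univ]
  exact Finset.card_filter_le _ _

lemma wt_eq_zero_iff (c : GaloisField 2 (2*m) → ZMod 2) : wt m c = 0 ↔ c = 0 := by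
  classical
  rw [wt_card, Finset.card_eq_zero, Finset.filter_eq_empty_iff]
  constructor
  · intro h; funext x
    have := h (Finset.mem_univ x)
    simpa using this
  · intro h x _; simp [h]

lemma wt_eq_card_iff (hm : 1 ≤ m) (c : GaloisField 2 (2*m) → ZMod 2) :
    wt m c = 2^(2*m) ↔ c = fun _ => 1 := by
  classical
  rw [wt_card, ← card_F m hm]
  constructor
  · intro h
    have h2 := Finset.eq_univ_of_card _ h
    funext x
    have : c x ≠ 0 := by
      have := Finset.mem_filter.mp (h2 ▸ Finset.mem_univ x)
      exact this.2
    rcases zmod2_cases (c x) with h3 | h3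
    · exact absurd h3 this
    · exact h3
  · intro h
    subst h
    rw [Finset.filter_true_of_mem (by intro x _; exact one_ne_zero), Finset.card_univ]

lemma wt_compl (hm : 1 ≤ m) (c : GaloisField 2 (2*m) → ZMod 2) :
    wt m c + wt m (c + fun _ => 1) = 2^(2*m) := by
  classical
  rw [wt_card, wt_card, ← card_F m hm, ← Finset.card_univ]
  simp only [Pi.add_apply]
  have hdisj : Disjoint (Finset.univ.filter fun x => c x ≠ 0)
      (Finset.univ.filter fun x => c x + 1 ≠ 0) := by
    rw [Finset.disjoint_filter]
    intro x _ h
    rcases zmod2_cases (c x) with h2 | h2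
    · exact absurd h2 h
    · rw [h2]; decide
  rw [← Finset.card_union_of_disjoint hdisj]
  congr 1
  apply Finset.eq_univ_of_forall
  intro x
  simp only [Finset.mem_union, Finset.mem_filter, Finset.mem_univ, true_and]
  rcases zmod2_cases (c x) with h | h <;> simp [h]

lemma wt_tr_mid (hm : 1 ≤ m) {w : GaloisField 2 (2*m)} (hw : w ≠ 0) (ε : ZMod 2) :
    wt m (fun x => tr m (w * x) + ε) = 2^(2*m-1) := by
  have hs := sum_chi m (fun x => tr m (w * x) + ε)
  rw [sum_chi_tr m hw ε, card_F m hm] at hs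
  have h1 : (2:ℕ)^(2*m) = 2 * 2^(2*m-1) := by
    rw [← pow_succ']
    congr 1
    omega
  rw [h1] at hs
  omega

lemma wt_of_bent (hm : 1 ≤ m) {g : GaloisField 2 (2*m) → ZMod 2} (hb : IsBent m g)
    (w : GaloisField 2 (2*m)) (ε : ZMod 2) :
    wt m (fun x => g x + tr m (w * x) + ε) = 2^(2*m-1) - 2^(m-1)
      ∨ wt m (fun x => g x + tr m (w * x) + ε) = 2^(2*m-1) + 2^(m-1) := by
  have hW : |∑ x, chi (g x + tr m (w * x))| = 2^m := hb w
  have hS : ∑ x, chi (g x + tr m (w * x) + ε) = (∑ x, chi (g x + tr m (w * x))) * chi ε := by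
    rw [Finset.sum_mul]
    exact Finset.sum_congr rfl fun x _ => chi_add _ _
  have habs : |∑ x, chi (g x + tr m (w * x) + ε)| = 2^m := by
    rw [hS, abs_mul, abs_chi, mul_one, hW]
  have hs := sum_chi m (fun x => g x + tr m (w * x) + ε)
  rw [card_F m hm] at hs
  rw [hs] at habs
  have h1 : (2:ℕ)^(2*m) = 2 * 2^(2*m-1) := by
    rw [← pow_succ']; congr 1; omega
  have h2 : (2:ℤ)^m = 2 * 2^(m-1) := by
    rw [← pow_succ']; congr 1; omega
  have h3 : (2:ℕ)^(m-1) ≤ 2^(2*m-1) := Nat.pow_le_pow_right (by norm_num) (by omega)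
  have h4 : ((2:ℕ)^(m-1) : ℤ) = (2:ℤ)^(m-1) := by push_cast; ring
  have h5 : ((2:ℕ)^(2*m-1) : ℤ) = (2:ℤ)^(2*m-1) := by push_cast; ring
  rcases abs_eq (by positivity : (0:ℤ) ≤ 2^m) |>.mp habs with h | h <;>
    [left; right] <;> (rw [h1] at h; rw [h2] at h; push_cast at h ⊢; omega)

lemma zmod2_neg (e : ZMod 2) : -e = e := by revert e; decide

lemma PhiL_inj (hm : 1 ≤ m) (hb : IsBentVectorial m ℓ f) :
    Function.Injective (PhiL m ℓ f) := by
  rw [injective_iff_map_eq_zero]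
  rintro ⟨a, w, ε⟩ h
  by_cases ha : a = 0
  · subst ha
    have h0 : ∀ x, tr m (w * x) + ε = 0 := by
      intro x
      have := congrFun h x
      rw [PhiL_apply] at this
      simpa using this
    have hε : ε = 0 := by
      have := h0 0
      rwa [mul_zero, tr_zero, zero_add] at this
    subst hε
    have hw : w = 0 := by
      by_contra hw
      obtain ⟨y, hy⟩ := exists_tr_one m hw
      have := h0 y
      rw [add_zero, hy] at this
      exact one_ne_zero this
    subst hw
    rfl
  · exfalso
    have h0 : ∀ x, (∑ j, a j * f j x) + tr m (w * x) = ε := by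
      intro x
      have h2 := congrFun h x
      rw [PhiL_apply] at h2
      have h3 : (∑ j, a j * f j x) + tr m (w * x) = -ε := by
        rw [eq_neg_of_add_eq_zero_left h2]
      rw [h3, zmod2_neg]
    have hsum : ∑ x, chi ((∑ j, a j * f j x) + tr m (w * x))
        = ((2^(2*m) : ℕ) : ℤ) * chi ε := by
      rw [Finset.sum_congr rfl (fun x _ => by rw [h0 x]), Finset.sum_const,
        Finset.card_univ, card_F m hm, nsmul_eq_mul]
    have habs : |∑ x, chi ((∑ j, a j * f j x) + tr m (w * x))| = 2^m := hb a ha w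
    rw [hsum, abs_mul, abs_chi, mul_one] at habs
    have h4 : |((2^(2*m) : ℕ) : ℤ)| = ((2^(2*m) : ℕ) : ℤ) := abs_of_nonneg (by positivity)
    rw [h4] at habs
    have hlt : (2:ℤ)^m < 2^(2*m) := by
      apply pow_lt_pow_right₀ (by norm_num) (by omega)
    rw [show ((2^(2*m):ℕ):ℤ) = (2:ℤ)^(2*m) by push_cast; ring] at habs
    omega

lemma sum_zmod2 {M : Type*} [AddCommMonoid M] (g : ZMod 2 → M) : ∑ ε, g ε = g 0 + g 1 := by
  have h : (Finset.univ : Finset (ZMod 2)) = {0, 1} := by decide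
  rw [h, Finset.sum_insert (by decide), Finset.sum_singleton]

lemma PhiL_a0 (w : GaloisField 2 (2*m)) (ε : ZMod 2) :
    PhiL m ℓ f (0, w, ε) = fun x => tr m (w * x) + ε := by
  funext x; rw [PhiL_apply]; simp

lemma PhiL_zero : PhiL m ℓ f (0, 0, 0) = 0 := map_zero _

lemma key_sum (hm : 1 ≤ m) (hb : IsBentVectorial m ℓ f) {a : Fin ℓ → ZMod 2} (ha : a ≠ 0)
    (w : GaloisField 2 (2*m)) (k : ℕ) :
    ((if wt m (PhiL m ℓ f (a,w,0)) = k then (1:ℕ) else 0)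
      + (if wt m (PhiL m ℓ f (a,w,1)) = k then 1 else 0))
    = (if 2^(2*m-1) - 2^(m-1) = k then 1 else 0)
      + (if 2^(2*m-1) + 2^(m-1) = k then 1 else 0) := by
  have h0 : wt m (PhiL m ℓ f (a,w,0)) = 2^(2*m-1) - 2^(m-1)
      ∨ wt m (PhiL m ℓ f (a,w,0)) = 2^(2*m-1) + 2^(m-1) :=
    wt_of_bent hm (hb a ha) w 0
  have hcompl : PhiL m ℓ f (a,w,1) = PhiL m ℓ f (a,w,0) + fun _ => 1 := by
    funext x
    rw [Pi.add_apply, PhiL_apply, PhiL_apply]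
    ring
  have hsum := wt_compl hm (PhiL m ℓ f (a,w,0))
  rw [← hcompl] at hsum
  have hBpos : 1 ≤ 2^(m-1) := Nat.one_le_two_pow
  have h2B : 2 * 2^(m-1) ≤ 2^(2*m-1) := by
    have h5 : 2^m ≤ 2^(2*m-1) := Nat.pow_le_pow_right (by norm_num) (by omega)
    have h6 : 2^m = 2*2^(m-1) := by rw [← pow_succ']; congr 1; omega
    omega
  have hq2A : 2^(2*m) = 2 * 2^(2*m-1) := by rw [← pow_succ']; congr 1; omega
  rcases h0 with h0 | h0
  · have h1 : wt m (PhiL m ℓ f (a,w,1)) = 2^(2*m-1) + 2^(m-1) := by omega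
    rw [h0, h1]
  · have h1 : wt m (PhiL m ℓ f (a,w,1)) = 2^(2*m-1) - 2^(m-1) := by omega
    rw [h0, h1, add_comm]

lemma card_param (m ℓ : ℕ) : Fintype.card (Fin ℓ → ZMod 2) = 2^ℓ := by
  rw [Fintype.card_fun]
  simp [ZMod.card]

set_option maxHeartbeats 2000000 in
lemma forward (hm : 1 ≤ m) (hb : IsBentVectorial m ℓ f) (k : ℕ) :
    {c | c ∈ code m ℓ f ∧ wt m c = k}.ncard =
      if k = 0 then 1
      else if k = 2^(2*m-1) - 2^(m-1) then (2^ℓ - 1) * 2^(2*m)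
      else if k = 2^(2*m-1) then 2 * (2^(2*m) - 1)
      else if k = 2^(2*m-1) + 2^(m-1) then (2^ℓ - 1) * 2^(2*m)
      else if k = 2^(2*m) then 1
      else 0 := by
  classical
  -- arithmetic facts
  have hBpos : 1 ≤ 2^(m-1) := Nat.one_le_two_pow
  have h2B : 2 * 2^(m-1) ≤ 2^(2*m-1) := by
    have h5 : 2^m ≤ 2^(2*m-1) := Nat.pow_le_pow_right (by norm_num) (by omega)
    have h6 : 2^m = 2*2^(m-1) := by rw [← pow_succ']; congr 1; omega
    omega
  have hq2A : 2^(2*m) = 2 * 2^(2*m-1) := by rw [← pow_succ']; congr 1; omega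
  have hLpos : 1 ≤ 2^ℓ := Nat.one_le_two_pow
  -- slice = image of parameter set
  have hslice : {c | c ∈ code m ℓ f ∧ wt m c = k}
      = (PhiL m ℓ f) '' {t | wt m (PhiL m ℓ f t) = k} := by
    ext c
    simp only [Set.mem_setOf_eq, Set.mem_image]
    constructor
    · rintro ⟨hc, hwt⟩
      have hc2 : c ∈ Set.range (PhiL m ℓ f) := by
        rw [← code_eq]; exact hc
      obtain ⟨t, rfl⟩ := hc2
      exact ⟨t, hwt, rfl⟩
    · rintro ⟨t, hwt, rfl⟩
      refine ⟨?_, hwt⟩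
      have : PhiL m ℓ f t ∈ Set.range (PhiL m ℓ f) := ⟨t, rfl⟩
      rwa [← code_eq] at this
  rw [hslice, Set.ncard_image_of_injective _ (PhiL_inj f hm hb)]
  have hfin : {t : T m ℓ | wt m (PhiL m ℓ f t) = k}
      = ↑(Finset.univ.filter fun t : T m ℓ => wt m (PhiL m ℓ f t) = k) := by
    ext t; simp
  rw [hfin, Set.ncard_coe_finset, Finset.card_filter]
  rw [Fintype.sum_prod_type]
  simp only [Fintype.sum_prod_type]
  simp only [sum_zmod2]
  -- split the sum over a
  rw [← Finset.sum_erase_add _ _ (Finset.mem_univ (0 : Fin ℓ → ZMod 2))]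
  -- the a = 0 part : split over w
  rw [← Finset.sum_erase_add _ _ (Finset.mem_univ (0 : GaloisField 2 (2*m)))]
  -- a = 0, w = 0 term
  have hw00 : wt m (PhiL m ℓ f (0, 0, 0)) = 0 := by
    rw [PhiL_zero]; exact (wt_eq_zero_iff 0).mpr rfl
  have hw01 : wt m (PhiL m ℓ f (0, 0, 1)) = 2^(2*m) := by
    rw [PhiL_one]; exact (wt_eq_card_iff hm _).mpr rfl
  rw [hw00, hw01]
  -- a = 0, w ≠ 0 part
  have hmid : ∀ w ∈ Finset.univ.erase (0 : GaloisField 2 (2*m)),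
      ((if wt m (PhiL m ℓ f (0, w, 0)) = k then (1:ℕ) else 0)
        + (if wt m (PhiL m ℓ f (0, w, 1)) = k then 1 else 0))
      = 2 * (if 2^(2*m-1) = k then 1 else 0) := by
    intro w hw
    have hw' : w ≠ 0 := (Finset.mem_erase.mp hw).1
    have e0 : wt m (PhiL m ℓ f (0, w, 0)) = 2^(2*m-1) := by
      rw [PhiL_a0]; exact wt_tr_mid hm hw' 0
    have e1 : wt m (PhiL m ℓ f (0, w, 1)) = 2^(2*m-1) := by
      rw [PhiL_a0]; exact wt_tr_mid hm hw' 1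
    rw [e0, e1]; ring
  rw [Finset.sum_congr rfl hmid, Finset.sum_const, Finset.card_erase_of_mem (Finset.mem_univ _),
    Finset.card_univ, card_F m hm, smul_eq_mul]
  -- a ≠ 0 part
  have hane : ∀ a ∈ Finset.univ.erase (0 : Fin ℓ → ZMod 2),
      (∑ w : GaloisField 2 (2*m),
        ((if wt m (PhiL m ℓ f (a, w, 0)) = k then (1:ℕ) else 0)
          + (if wt m (PhiL m ℓ f (a, w, 1)) = k then 1 else 0)))
      = 2^(2*m) * ((if 2^(2*m-1) - 2^(m-1) = k then 1 else 0)
          + (if 2^(2*m-1) + 2^(m-1) = k then 1 else 0)) := by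
    intro a ha
    have ha' : a ≠ 0 := (Finset.mem_erase.mp ha).1
    rw [Finset.sum_congr rfl (fun w _ => key_sum f hm hb ha' w k), Finset.sum_const,
      Finset.card_univ, card_F m hm, smul_eq_mul]
  rw [Finset.sum_congr rfl hane, Finset.sum_const, Finset.card_erase_of_mem (Finset.mem_univ _),
    Finset.card_univ, card_param m ℓ, smul_eq_mul]
  -- now pure arithmetic
  have hexp : (2^ℓ - 1) * (2^(2*m) * ((if 2^(2*m-1) - 2^(m-1) = k then 1 else 0)
        + (if 2^(2*m-1) + 2^(m-1) = k then 1 else 0)))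
      = ((2^ℓ - 1) * 2^(2*m)) * (if 2^(2*m-1) - 2^(m-1) = k then 1 else 0)
        + ((2^ℓ - 1) * 2^(2*m)) * (if 2^(2*m-1) + 2^(m-1) = k then 1 else 0) := by
    ring
  rw [hexp]
  have hPq : 2^(2*m) ≤ (2^ℓ - 1) * 2^(2*m) ∨ True := Or.inr trivial
  generalize hP : (2^ℓ - 1) * 2^(2*m) = P
  split_ifs <;> omega

instance (n : ℕ) : DecidableEq (GaloisField 2 n) := Classical.decEq _

lemma mem_code_Phi (t : T m ℓ) : PhiL m ℓ f t ∈ code m ℓ f := by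
  have h : PhiL m ℓ f t ∈ Set.range (PhiL m ℓ f) := ⟨t, rfl⟩
  rwa [← code_eq] at h

lemma ncard_eq_filter (P : (GaloisField 2 (2*m) → ZMod 2) → Prop) [DecidablePred P] :
    {c | P c}.ncard = (Finset.univ.filter P).card := by
  rw [← Set.ncard_coe_finset]
  congr 1
  ext c; simp

section Backward

variable (hm : 1 ≤ m)
  (hdist : ∀ k : ℕ, {c | c ∈ code m ℓ f ∧ wt m c = k}.ncard =
        if k = 0 then 1
        else if k = 2^(2*m-1) - 2^(m-1) then (2^ℓ - 1) * 2^(2*m)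
        else if k = 2^(2*m-1) then 2 * (2^(2*m) - 1)
        else if k = 2^(2*m-1) + 2^(m-1) then (2^ℓ - 1) * 2^(2*m)
        else if k = 2^(2*m) then 1
        else 0)

include hm hdist

lemma wt_mem_five {c : GaloisField 2 (2*m) → ZMod 2} (hc : c ∈ code m ℓ f) :
    wt m c = 0 ∨ wt m c = 2^(2*m-1) - 2^(m-1) ∨ wt m c = 2^(2*m-1)
      ∨ wt m c = 2^(2*m-1) + 2^(m-1) ∨ wt m c = 2^(2*m) := by
  by_contra h
  push_neg at h
  obtain ⟨h1, h2, h3, h4, h5⟩ := h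
  have hpos : 0 < {c' | c' ∈ code m ℓ f ∧ wt m c' = wt m c}.ncard :=
    (Set.ncard_pos (Set.toFinite _)).mpr ⟨c, hc, rfl⟩
  rw [hdist, if_neg h1, if_neg h2, if_neg h3, if_neg h4, if_neg h5] at hpos
  exact lt_irrefl 0 hpos

lemma code_card : (code m ℓ f : Set (GaloisField 2 (2*m) → ZMod 2)).ncard = 2^(ℓ + 2*m + 1) := by
  classical
  have hBpos : 1 ≤ 2^(m-1) := Nat.one_le_two_pow
  have h2B : 2 * 2^(m-1) ≤ 2^(2*m-1) := by
    have h5 : 2^m ≤ 2^(2*m-1) := Nat.pow_le_pow_right (by norm_num) (by omega)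
    have h6 : 2^m = 2*2^(m-1) := by rw [← pow_succ']; congr 1; omega
    omega
  have hq2A : 2^(2*m) = 2 * 2^(2*m-1) := by rw [← pow_succ']; congr 1; omega
  have hcoe : (code m ℓ f : Set (GaloisField 2 (2*m) → ZMod 2)).ncard
      = (Finset.univ.filter fun c => c ∈ code m ℓ f).card := by
    rw [← Set.ncard_coe_finset]
    congr 1
    ext c; simp [SetLike.mem_coe]
  rw [hcoe]
  rw [Finset.card_eq_sum_card_fiberwise
    (f := fun c => wt m c) (t := Finset.range (2^(2*m) + 1))
    (fun c _ => Finset.mem_range.mpr (Nat.lt_add_one_of_le (wt_le hm c)))]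
  have hterm : ∀ k ∈ Finset.range (2^(2*m) + 1),
      ((Finset.univ.filter fun c => c ∈ code m ℓ f).filter fun c => wt m c = k).card
      = (if k = 0 then 1 else 0)
        + (if k = 2^(2*m-1) - 2^(m-1) then (2^ℓ - 1) * 2^(2*m) else 0)
        + (if k = 2^(2*m-1) then 2 * (2^(2*m) - 1) else 0)
        + (if k = 2^(2*m-1) + 2^(m-1) then (2^ℓ - 1) * 2^(2*m) else 0)
        + (if k = 2^(2*m) then 1 else 0) := by
    intro k _
    have e1 : ((Finset.univ.filter fun c => c ∈ code m ℓ f).filter fun c => wt m c = k)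
        = Finset.univ.filter fun c => c ∈ code m ℓ f ∧ wt m c = k := by
      rw [Finset.filter_filter]
    rw [e1, ← ncard_eq_filter _, hdist]
    generalize (2^ℓ - 1) * 2^(2*m) = P
    split_ifs <;> omega
  rw [Finset.sum_congr rfl hterm]
  simp only [Finset.sum_add_distrib, Finset.sum_ite_eq' (Finset.range (2^(2*m)+1))]
  have m1 : (0 : ℕ) ∈ Finset.range (2^(2*m)+1) := Finset.mem_range.mpr (by omega)
  have m2 : 2^(2*m-1) - 2^(m-1) ∈ Finset.range (2^(2*m)+1) := Finset.mem_range.mpr (by omega)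
  have m3 : 2^(2*m-1) ∈ Finset.range (2^(2*m)+1) := Finset.mem_range.mpr (by omega)
  have m4 : 2^(2*m-1) + 2^(m-1) ∈ Finset.range (2^(2*m)+1) := Finset.mem_range.mpr (by omega)
  have m5 : 2^(2*m) ∈ Finset.range (2^(2*m)+1) := Finset.mem_range.mpr (by omega)
  rw [if_pos m1, if_pos m2, if_pos m3, if_pos m4, if_pos m5]
  have hP : (2^ℓ - 1) * 2^(2*m) = 2^(ℓ + 2*m) - 2^(2*m) := by
    rw [Nat.sub_mul, one_mul, ← pow_add]
  have hle : 2^(2*m) ≤ 2^(ℓ + 2*m) := Nat.pow_le_pow_right (by norm_num) (by omega)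
  have hsucc : 2^(ℓ + 2*m + 1) = 2 * 2^(ℓ + 2*m) := by rw [← pow_succ']
  omega

lemma PhiL_inj' : Function.Injective (PhiL m ℓ f) := by
  classical
  have hcard := code_card f hm hdist
  rw [code_eq] at hcard
  haveI : DecidableEq (GaloisField 2 (2*m) → ZMod 2) := Classical.decEq _
  have hT : Fintype.card (T m ℓ) = 2^(ℓ + 2*m + 1) := by
    rw [Fintype.card_prod, Fintype.card_prod, card_param m ℓ, ← Nat.card_eq_fintype_card,
      GaloisField.card 2 (2*m) (by omega), ZMod.card]
    rw [pow_succ, pow_add]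
    ring
  have hR : Fintype.card (Set.range (PhiL m ℓ f)) = 2^(ℓ + 2*m + 1) := by
    rw [← Set.toFinset_card, ← Set.ncard_eq_toFinset_card']
    exact hcard
  have hbij : Function.Bijective (Set.rangeFactorization (PhiL m ℓ f)) := by
    rw [Fintype.bijective_iff_surjective_and_card]
    exact ⟨Set.rangeFactorization_surjective, by rw [hT, hR]⟩
  have : (PhiL m ℓ f : T m ℓ → _) = Subtype.val ∘ Set.rangeFactorization (PhiL m ℓ f) := rfl
  rw [this]
  exact Subtype.val_injective.comp hbij.injective

lemma mid_slice :
    {c | c ∈ code m ℓ f ∧ wt m c = 2^(2*m-1)}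
      = Set.range (fun p : {w : GaloisField 2 (2*m) // w ≠ 0} × ZMod 2 =>
          PhiL m ℓ f (0, p.1.1, p.2)) := by
  classical
  have hBpos : 1 ≤ 2^(m-1) := Nat.one_le_two_pow
  have h2B : 2 * 2^(m-1) ≤ 2^(2*m-1) := by
    have h5 : 2^m ≤ 2^(2*m-1) := Nat.pow_le_pow_right (by norm_num) (by omega)
    have h6 : 2^m = 2*2^(m-1) := by rw [← pow_succ']; congr 1; omega
    omega
  have hq2A : 2^(2*m) = 2 * 2^(2*m-1) := by rw [← pow_succ']; congr 1; omega
  have hinj := PhiL_inj' f hm hdist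
  set ψ := fun p : {w : GaloisField 2 (2*m) // w ≠ 0} × ZMod 2 =>
    PhiL m ℓ f (0, p.1.1, p.2) with hψ
  have hψinj : Function.Injective ψ := by
    intro p p' hpp
    have := hinj hpp
    rw [Prod.mk.injEq, Prod.mk.injEq] at this
    exact Prod.ext (Subtype.ext this.2.1) this.2.2
  have hsub : Set.range ψ ⊆ {c | c ∈ code m ℓ f ∧ wt m c = 2^(2*m-1)} := by
    rintro c ⟨p, rfl⟩
    refine ⟨mem_code_Phi f _, ?_⟩
    show wt m (PhiL m ℓ f (0, p.1.1, p.2)) = 2^(2*m-1)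
    rw [PhiL_a0]
    exact wt_tr_mid hm p.1.2 p.2
  have hcards : (Set.range ψ).ncard = (2^(2*m) - 1) * 2 := by
    rw [← Set.image_univ, Set.ncard_image_of_injective _ hψinj, Set.ncard_univ,
      Nat.card_eq_fintype_card, Fintype.card_prod,
      ZMod.card]
    congr 1
    have : Fintype.card {w : GaloisField 2 (2*m) // w ≠ 0}
        = Fintype.card (GaloisField 2 (2*m)) - 1 := by
      rw [Fintype.card_subtype_compl, Fintype.card_subtype_eq]
    rw [this, ← Nat.card_eq_fintype_card, GaloisField.card 2 (2*m) (by omega)]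
  have hslice : {c | c ∈ code m ℓ f ∧ wt m c = 2^(2*m-1)}.ncard = 2 * (2^(2*m) - 1) := by
    rw [hdist]
    rw [if_neg (by omega), if_neg (by omega), if_pos rfl]
  symm
  apply Set.eq_of_subset_of_ncard_le hsub _ (Set.toFinite _)
  rw [hcards, hslice]
  ring_nf
  omega

lemma backward : IsBentVectorial m ℓ f := by
  classical
  have hBpos : 1 ≤ 2^(m-1) := Nat.one_le_two_pow
  have h2B : 2 * 2^(m-1) ≤ 2^(2*m-1) := by
    have h5 : 2^m ≤ 2^(2*m-1) := Nat.pow_le_pow_right (by norm_num) (by omega)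
    have h6 : 2^m = 2*2^(m-1) := by rw [← pow_succ']; congr 1; omega
    omega
  have hq2A : 2^(2*m) = 2 * 2^(2*m-1) := by rw [← pow_succ']; congr 1; omega
  have h2m : (2:ℕ)^m = 2*2^(m-1) := by rw [← pow_succ']; congr 1; omega
  have hinj := PhiL_inj' f hm hdist
  intro a ha w
  set c0 := PhiL m ℓ f (a, w, 0) with hc0
  have hmem : c0 ∈ code m ℓ f := mem_code_Phi f _
  have hfive := wt_mem_five f hm hdist hmem
  -- rule out weight 0
  have hne0 : wt m c0 ≠ 0 := by
    intro h0
    have : c0 = 0 := (wt_eq_zero_iff c0).mp h0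
    rw [hc0, ← PhiL_zero f] at this
    have := hinj this
    rw [Prod.mk.injEq] at this
    exact ha this.1
  -- rule out weight 2^(2m)
  have hneq : wt m c0 ≠ 2^(2*m) := by
    intro h0
    have : c0 = fun _ => 1 := (wt_eq_card_iff hm c0).mp h0
    rw [hc0, ← PhiL_one f] at this
    have := hinj this
    rw [Prod.mk.injEq] at this
    exact ha this.1
  -- rule out weight 2^(2m-1)
  have hnemid : wt m c0 ≠ 2^(2*m-1) := by
    intro h0
    have hin : c0 ∈ {c | c ∈ code m ℓ f ∧ wt m c = 2^(2*m-1)} := ⟨hmem, h0⟩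
    rw [mid_slice f hm hdist] at hin
    obtain ⟨p, hp⟩ := hin
    have := hinj hp
    rw [Prod.mk.injEq] at this
    exact ha this.1.symm
  have hwt : wt m c0 = 2^(2*m-1) - 2^(m-1) ∨ wt m c0 = 2^(2*m-1) + 2^(m-1) := by
    rcases hfive with h | h | h | h | h
    · exact absurd h hne0
    · exact Or.inl h
    · exact absurd h hnemid
    · exact Or.inr h
    · exact absurd h hneq
  -- now compute the Walsh sum
  have hs := sum_chi m c0
  rw [card_F m hm] at hs
  have hrw : ∀ x : GaloisField 2 (2*m),
      chi ((∑ j, a j * f j x) + tr m (w * x)) = chi (c0 x) := by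
    intro x
    have : c0 x = (∑ j, a j * f j x) + tr m (w * x) + 0 := PhiL_apply f (a, w, 0) x
    rw [this, add_zero]
  show |∑ x, chi ((∑ j, a j * f j x) + tr m (w * x))| = 2^m
  rw [Finset.sum_congr rfl (fun x _ => hrw x), hs]
  rcases hwt with h | h <;> rw [h]
  · have : ((2^(2*m) : ℕ) : ℤ) - 2 * ((2^(2*m-1) - 2^(m-1) : ℕ) : ℤ) = ((2^m : ℕ) : ℤ) := by
      omega
    rw [this, abs_of_nonneg (by positivity)]
    push_cast
    ring
  · have : ((2^(2*m) : ℕ) : ℤ) - 2 * ((2^(2*m-1) + 2^(m-1) : ℕ) : ℤ) = -((2^m : ℕ) : ℤ) := by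
      omega
    rw [this, abs_neg, abs_of_nonneg (by positivity)]
    push_cast
    ring

end Backward

end BentAux

/-- coding-theoretic characterization of bent vectorial
functions via the weight distribution of `C(f_1, …, f_ℓ)`. -/
theorem stmt_0 (m ℓ : ℕ) (hm : 1 ≤ m) (hℓ1 : 1 ≤ ℓ) (hℓm : ℓ ≤ m)
    (f : Fin ℓ → GaloisField 2 (2*m) → ZMod 2) :
    IsBentVectorial m ℓ f ↔
      ∀ k : ℕ, {c | c ∈ code m ℓ f ∧ wt m c = k}.ncard =
        if k = 0 then 1
        else if k = 2^(2*m-1) - 2^(m-1) then (2^ℓ - 1) * 2^(2*m)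
        else if k = 2^(2*m-1) then 2 * (2^(2*m) - 1)
        else if k = 2^(2*m-1) + 2^(m-1) then (2^ℓ - 1) * 2^(2*m)
        else if k = 2^(2*m) then 1
        else 0 := by
  constructor
  · intro hb k
    exact BentAux.forward f hm hb k
  · intro hdist
    exact BentAux.backward f hm hdist
end
end

section
/- Let m ≥ 2, 1 ≤ ℓ ≤ m, and let (f_1, …, f_ℓ) be a (2m, ℓ) bent vectorial function on GF(2^{2m}). Then the supports of the codewords of Hamming weight 2^{2m−1} − 2^{m−1} of C(f_1, …, f_ℓ) hold a 2-design: for every two distinct elements x, y of GF(2^{2m}), the number of codewords c of C(f_1, …, f_ℓ) of Hamming weight 2^{2m−1} − 2^{m−1} with c_x = c_y = 1 is exactly (2^ℓ − 1)(2^{2m−2} − 2^{m−1}). -/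
noncomputable section

section Aux
variable {m : ℕ}

local notation "F" => GaloisField 2 (2*m)

lemma sgn_add : ∀ u v : ZMod 2, ((-1:ℤ))^((u+v).val) = (-1)^u.val * (-1)^v.val := by decide
lemma sgn_eq_one_iff : ∀ v : ZMod 2, ((-1:ℤ))^v.val = 1 ↔ v = 0 := by decide
lemma sgn_eq_neg_one_iff : ∀ v : ZMod 2, ((-1:ℤ))^v.val = -1 ↔ v = 1 := by decide
lemma sgn_sq : ∀ v : ZMod 2, ((-1:ℤ))^v.val * (-1)^v.val = 1 := by decide
lemma tr_add (a b : F) : tr m (a + b) = tr m a + tr m b := map_add _ a b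
lemma tr_zero : tr m 0 = 0 := map_zero _
lemma tr_smul (a : ZMod 2) (b : F) : tr m (a • b) = a * tr m b := by
  unfold tr; rw [map_smul, smul_eq_mul]
lemma cardF (hm : m ≠ 0) : Fintype.card F = 2^(2*m) := by
  rw [← Nat.card_eq_fintype_card]; exact GaloisField.card 2 (2*m) (by omega)

instance instSep (n : ℕ) : Algebra.IsSeparable (ZMod 2) (GaloisField 2 n) :=
  IsGalois.to_isSeparable

lemma tr_exists (u : F) (hu : u ≠ 0) : ∃ v : F, tr m (u * v) = 1 := by
  have hnd := traceForm_nondegenerate (ZMod 2) F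
  by_contra h
  push_neg at h
  apply hu
  apply hnd.1 u
  intro v
  have hv := h v
  have : ∀ z : ZMod 2, z ≠ 1 → z = 0 := by decide
  have := this _ hv
  rwa [Algebra.traceForm_apply]

lemma tr_eq_zero_iff (u : F) (h : ∀ v : F, tr m (u * v) = 0) : u = 0 := by
  have hnd := traceForm_nondegenerate (ZMod 2) F
  apply hnd.1 u
  intro v
  rw [Algebra.traceForm_apply]
  exact h v

lemma char_sum (u : F) (hu : u ≠ 0) : ∑ v : F, (-1:ℤ)^((tr m (u*v)).val) = 0 := by
  obtain ⟨v₀, hv₀⟩ := tr_exists u hu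
  have h1 : ∑ v : F, (-1:ℤ)^((tr m (u*(v+v₀))).val) = ∑ v : F, (-1:ℤ)^((tr m (u*v)).val) :=
    Fintype.sum_equiv (Equiv.addRight v₀) _ _ (fun v => rfl)
  have h2 : ∀ v : F, (-1:ℤ)^((tr m (u*(v+v₀))).val) = -((-1:ℤ)^((tr m (u*v)).val)) := by
    intro v
    rw [mul_add, tr_add, sgn_add, hv₀]
    have : ((-1:ℤ))^((1 : ZMod 2)).val = -1 := by decide
    rw [this]; ring
  rw [Fintype.sum_congr _ _ h2, Finset.sum_neg_distrib] at h1
  omega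

open scoped Classical in
lemma char_sum' (hm : m ≠ 0) (u : F) :
    ∑ v : F, (-1:ℤ)^((tr m (u*v)).val) = if u = 0 then 2^(2*m) else 0 := by
  split_ifs with h
  · subst h
    simp only [zero_mul, tr_zero]
    rw [Finset.sum_const]
    simp [cardF hm]
  · exact char_sum u h

/-- Walsh transform. -/
def Wal (m : ℕ) (g : GaloisField 2 (2*m) → ZMod 2) (w : GaloisField 2 (2*m)) : ℤ :=
  ∑ z : GaloisField 2 (2*m), (-1:ℤ)^((g z + tr m (w*z)).val)

lemma eq_of_add_eq_zero {x z : F} (h : x + z = 0) : z = x := by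
  have h1 : x = -z := add_eq_zero_iff_eq_neg.mp h
  rw [CharTwo.neg_eq] at h1
  exact h1.symm

open scoped Classical in
lemma sum_W_mul (hm : m ≠ 0) (g : F → ZMod 2) (x : F) :
    ∑ w : F, (-1:ℤ)^((g x + tr m (w*x)).val) * Wal m g w = 2^(2*m) := by
  have expand : ∀ w : F, (-1:ℤ)^((g x + tr m (w*x)).val) * Wal m g w
      = ∑ z : F, ((-1:ℤ)^((g x).val) * (-1)^((g z).val)) * (-1)^((tr m (w*(x+z))).val) := by
    intro w
    rw [Wal, Finset.mul_sum]
    apply Finset.sum_congr rfl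
    intro z _
    rw [sgn_add, sgn_add, mul_add, tr_add, sgn_add]
    ring
  rw [Fintype.sum_congr _ _ expand, Finset.sum_comm]
  have inner : ∀ z : F, ∑ w : F, ((-1:ℤ)^((g x).val) * (-1)^((g z).val)) * (-1)^((tr m (w*(x+z))).val)
      = ((-1:ℤ)^((g x).val) * (-1)^((g z).val)) * (if z = x then (2:ℤ)^(2*m) else 0) := by
    intro z
    rw [← Finset.mul_sum]
    congr 1
    have : ∀ w : F, tr m (w * (x+z)) = tr m ((x+z) * w) := by intro w; rw [mul_comm]
    rw [Fintype.sum_congr _ _ (fun w => by rw [this w]), char_sum' hm (x+z)]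
    congr 1
    simp only [eq_iff_iff]
    constructor
    · intro h; exact eq_of_add_eq_zero h
    · intro h; subst h; exact CharTwo.add_self_eq_zero _
  rw [Fintype.sum_congr _ _ inner]
  have step : ∀ z : F, ((-1:ℤ)^((g x).val) * (-1)^((g z).val)) * (if z = x then (2:ℤ)^(2*m) else 0)
      = if z = x then ((-1:ℤ)^((g x).val) * (-1)^((g z).val)) * (2:ℤ)^(2*m) else 0 := by
    intro z; split_ifs <;> ring
  rw [Fintype.sum_congr _ _ step, Finset.sum_ite_eq' Finset.univ x]
  simp [sgn_sq]

lemma sum_WW (g : F → ZMod 2) {x y : F} (hxy : x ≠ y)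
    (hW : ∀ w : F, |Wal m g w| = 2^m) :
    ∑ w : F, ((-1:ℤ)^((g x + tr m (w*x)).val) * Wal m g w) *
      ((-1:ℤ)^((g y + tr m (w*y)).val) * Wal m g w) = 0 := by
  have hxy0 : x + y ≠ 0 := fun h => hxy (eq_of_add_eq_zero h).symm
  have hW2 : ∀ w : F, Wal m g w * Wal m g w = 2^(2*m) := by
    intro w
    have : |Wal m g w| * |Wal m g w| = 2^m * 2^m := by rw [hW w]
    rw [abs_mul_abs_self] at this
    rw [this, ← pow_add, two_mul]
  have expand : ∀ w : F, ((-1:ℤ)^((g x + tr m (w*x)).val) * Wal m g w) *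
      ((-1:ℤ)^((g y + tr m (w*y)).val) * Wal m g w)
      = ((-1:ℤ)^((g x).val) * (-1)^((g y).val) * 2^(2*m)) * (-1)^((tr m (w*(x+y))).val) := by
    intro w
    rw [sgn_add, sgn_add, mul_add, tr_add, sgn_add]
    linear_combination ((-1:ℤ)^((g x).val) * (-1)^((tr m (w*x)).val) * (-1)^((g y).val) *
      (-1)^((tr m (w*y)).val)) * hW2 w
  rw [Fintype.sum_congr _ _ expand, ← Finset.mul_sum]
  have : ∀ w : F, tr m (w * (x+y)) = tr m ((x+y) * w) := by intro w; rw [mul_comm]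
  rw [Fintype.sum_congr _ _ (fun w => by rw [this w]), char_sum (x+y) hxy0, mul_zero]

open scoped Classical in
lemma wt_sum (c : F → ZMod 2) (hm : m ≠ 0) :
    ∑ z : F, (-1:ℤ)^((c z).val) = 2^(2*m) - 2 * (wt m c : ℤ) := by
  have hwt : wt m c = (Finset.univ.filter (fun z : F => c z ≠ 0)).card := by
    rw [wt, ← Set.ncard_coe_finset]
    congr 1
    ext z
    simp
  have hsplit := Finset.sum_filter_add_sum_filter_not Finset.univ
    (fun z : F => c z ≠ 0) (fun z => (-1:ℤ)^((c z).val))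
  have hz1 : ∀ v : ZMod 2, v ≠ 0 → (-1:ℤ)^v.val = -1 := by decide
  have hz0 : ∀ v : ZMod 2, ¬ v ≠ 0 → (-1:ℤ)^v.val = 1 := by decide
  have h1 : ∑ z ∈ Finset.univ.filter (fun z : F => c z ≠ 0), (-1:ℤ)^((c z).val)
      = -((Finset.univ.filter (fun z : F => c z ≠ 0)).card : ℤ) := by
    rw [Finset.sum_congr rfl (fun z hz => hz1 (c z) (Finset.mem_filter.mp hz).2),
      Finset.sum_const]
    simp
  have h2 : ∑ z ∈ Finset.univ.filter (fun z : F => ¬ c z ≠ 0), (-1:ℤ)^((c z).val)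
      = ((Finset.univ.filter (fun z : F => ¬ c z ≠ 0)).card : ℤ) := by
    rw [Finset.sum_congr rfl (fun z hz => hz0 (c z) (Finset.mem_filter.mp hz).2),
      Finset.sum_const]
    simp
  have hcards := Finset.card_filter_add_card_filter_not (s := (Finset.univ : Finset F))
    (p := fun z : F => c z ≠ 0)
  rw [Finset.card_univ, cardF hm] at hcards
  rw [← hsplit, h1, h2, hwt]
  have hb : ((2^(2*m) : ℕ) : ℤ) = 2^(2*m) := by push_cast; ring
  omega

lemma wt_eq_iff (hm : 1 ≤ m) (c : F → ZMod 2) :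
    wt m c = 2^(2*m-1) - 2^(m-1) ↔ ∑ z : F, (-1:ℤ)^((c z).val) = 2^m := by
  rw [wt_sum c (by omega)]
  have e1 : (2:ℤ)^(2*m) = 2 * 2^(2*m-1) := by
    rw [← pow_succ']
    congr 1
    omega
  have e2 : (2:ℤ)^m = 2 * 2^(m-1) := by
    rw [← pow_succ']
    congr 1
    omega
  have e3 : ((2^(2*m-1) - 2^(m-1) : ℕ) : ℤ) = 2^(2*m-1) - 2^(m-1) := by
    have : (2:ℕ)^(m-1) ≤ 2^(2*m-1) := Nat.pow_le_pow_right (by norm_num) (by omega)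
    push_cast [Nat.cast_sub this]
    ring
  constructor
  · intro h
    rw [h, e3, e1, e2]
    ring
  · intro h
    have : (wt m c : ℤ) = ((2^(2*m-1) - 2^(m-1) : ℕ) : ℤ) := by
      rw [e3, e1, e2] at *
      linarith
    exact_mod_cast this


variable {ℓ : ℕ}

/-- The parametrization of the code. -/
def Phi (m ℓ : ℕ) (f : Fin ℓ → GaloisField 2 (2*m) → ZMod 2)
    (p : (Fin ℓ → ZMod 2) × GaloisField 2 (2*m) × ZMod 2) :
    GaloisField 2 (2*m) → ZMod 2 :=
  fun x => (∑ j, p.1 j * f j x) + tr m (p.2.1 * x) + p.2.2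

lemma Phi_mem (f : Fin ℓ → F → ZMod 2) (p : (Fin ℓ → ZMod 2) × F × ZMod 2) :
    Phi m ℓ f p ∈ code m ℓ f := by
  have hrw : Phi m ℓ f p = (∑ j, p.1 j • f j) + (fun x => tr m (p.2.1 * x))
      + p.2.2 • (fun _ => (1 : ZMod 2)) := by
    funext x
    simp [Phi, Finset.sum_apply, smul_eq_mul]
  rw [hrw]
  apply Submodule.add_mem
  · apply Submodule.add_mem
    · apply Submodule.sum_mem
      intro j _
      apply Submodule.smul_mem
      apply Submodule.subset_span
      exact Or.inl (Or.inl ⟨j, rfl⟩)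
    · apply Submodule.subset_span
      exact Or.inl (Or.inr ⟨p.2.1, rfl⟩)
  · apply Submodule.smul_mem
    apply Submodule.subset_span
    exact Or.inr rfl

lemma mem_code_iff (f : Fin ℓ → F → ZMod 2) (c : F → ZMod 2) :
    c ∈ code m ℓ f ↔ ∃ p, Phi m ℓ f p = c := by
  constructor
  · intro hc
    induction hc using Submodule.span_induction with
    | mem v hv =>
      rcases hv with (⟨j, rfl⟩ | ⟨w, rfl⟩) | hv
      · exact ⟨(Pi.single j 1, 0, 0), by
          funext x
          simp [Phi, Pi.single_apply, Finset.sum_ite_eq', tr_zero]⟩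
      · exact ⟨(0, w, 0), by funext x; simp [Phi]⟩
      · rcases hv with rfl
        exact ⟨(0, 0, 1), by funext x; simp [Phi, tr_zero]⟩
    | zero => exact ⟨(0, 0, 0), by funext x; simp [Phi, tr_zero]⟩
    | add u v _ _ hu hv =>
      obtain ⟨p, rfl⟩ := hu
      obtain ⟨q, rfl⟩ := hv
      refine ⟨p + q, ?_⟩
      funext x
      simp only [Phi, Pi.add_apply, Prod.fst_add, Prod.snd_add, add_mul, tr_add,
        Finset.sum_add_distrib]
      ring
    | smul a v _ hv =>
      obtain ⟨p, rfl⟩ := hv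
      refine ⟨a • p, ?_⟩
      funext x
      have h2 : tr m ((a • p.2.1) * x) = a * tr m (p.2.1 * x) := by
        rw [smul_mul_assoc, tr_smul]
      simp only [Phi, Pi.smul_apply, Prod.smul_fst, Prod.smul_snd, smul_eq_mul, h2,
        Finset.mul_sum]
      rw [mul_add, mul_add, Finset.mul_sum]
      congr 1
      congr 1
      exact Finset.sum_congr rfl (fun j _ => by ring)
  · rintro ⟨p, rfl⟩
    exact Phi_mem f p


lemma zmod2_add_self : ∀ z : ZMod 2, z + z = 0 := by decide
lemma zmod2_neg : ∀ z : ZMod 2, -z = z := by decide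

lemma param_add_self (p : (Fin ℓ → ZMod 2) × F × ZMod 2) : p + p = 0 := by
  refine Prod.ext ?_ (Prod.ext ?_ ?_)
  · funext j; exact zmod2_add_self _
  · exact CharTwo.add_self_eq_zero _
  · exact zmod2_add_self _

lemma Phi_ker (hm : 1 ≤ m) {f : Fin ℓ → F → ZMod 2} (hf : IsBentVectorial m ℓ f)
    (p : (Fin ℓ → ZMod 2) × F × ZMod 2) (h : Phi m ℓ f p = 0) : p = 0 := by
  obtain ⟨a, w, ε⟩ := p
  have hx : ∀ x : F, (∑ j, a j * f j x) + tr m (w * x) + ε = 0 := fun x => congrFun h x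
  by_cases ha : a = 0
  · subst ha
    have hx' : ∀ x : F, tr m (w * x) + ε = 0 := by
      intro x
      have := hx x
      simpa using this
    have hε : ε = 0 := by
      have := hx' 0
      rw [mul_zero, tr_zero, zero_add] at this
      exact this
    subst hε
    have hw : w = 0 := tr_eq_zero_iff w (fun v => by simpa using hx' v)
    subst hw
    rfl
  · exfalso
    have hb := hf a ha w
    have hc : ∀ x : F, (∑ j, a j * f j x) + tr m (w * x) = ε := by
      intro x
      have h1 := hx x
      have : (∑ j, a j * f j x) + tr m (w * x) = -ε := by linear_combination h1
      rwa [zmod2_neg] at this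
    rw [Fintype.sum_congr _ _ (fun x => by rw [hc x])] at hb
    rw [Finset.sum_const, Finset.card_univ, cardF (by omega)] at hb
    rw [abs_nsmul, abs_pow, abs_neg, abs_one, one_pow] at hb
    rw [nsmul_eq_mul, mul_one] at hb
    have hlt : (2:ℤ)^m < 2^(2*m) := by
      apply pow_lt_pow_right₀ (by norm_num)
      omega
    push_cast at hb
    omega

lemma Phi_add (f : Fin ℓ → F → ZMod 2) (p q : (Fin ℓ → ZMod 2) × F × ZMod 2) :
    Phi m ℓ f (p + q) = Phi m ℓ f p + Phi m ℓ f q := by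
  funext x
  simp only [Phi, Pi.add_apply, Prod.fst_add, Prod.snd_add, add_mul, tr_add,
    Finset.sum_add_distrib]
  ring

lemma Phi_injective (hm : 1 ≤ m) {f : Fin ℓ → F → ZMod 2} (hf : IsBentVectorial m ℓ f) :
    Function.Injective (Phi m ℓ f) := by
  intro p q hpq
  have h0 : Phi m ℓ f (p + q) = 0 := by
    rw [Phi_add, hpq]
    funext x
    exact zmod2_add_self _
  have hsum : p + q = 0 := Phi_ker hm hf _ h0
  have h1 : -p = q := neg_eq_of_add_eq_zero_right hsum
  have h2 : -p = p := neg_eq_of_add_eq_zero_right (param_add_self p)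
  rw [h2] at h1
  exact h1


lemma sum_sgn_add_const (h : F → ZMod 2) (ε : ZMod 2) :
    ∑ z : F, (-1:ℤ)^((h z + ε).val) = (∑ z : F, (-1:ℤ)^((h z).val)) * (-1)^ε.val := by
  rw [Finset.sum_mul]
  exact Fintype.sum_congr _ _ (fun z => by rw [sgn_add])

open scoped Classical in
lemma count_T (hm : 2 ≤ m) (g : F → ZMod 2) (hW : ∀ w : F, |Wal m g w| = 2^m)
    {x y : F} (hxy : x ≠ y) :
    (Finset.univ.filter (fun w : F =>
       (-1:ℤ)^((g x + tr m (w*x)).val) * Wal m g w = -(2^m) ∧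
       (-1:ℤ)^((g y + tr m (w*y)).val) * Wal m g w = -(2^m))).card
      = 2^(2*m-2) - 2^(m-1) := by
  set A : F → ℤ := fun w => (-1:ℤ)^((g x + tr m (w*x)).val) * Wal m g w with hA_def
  set B : F → ℤ := fun w => (-1:ℤ)^((g y + tr m (w*y)).val) * Wal m g w with hB_def
  have habs : ∀ (v : ZMod 2) (w : F), (-1:ℤ)^v.val * Wal m g w = 2^m ∨
      (-1:ℤ)^v.val * Wal m g w = -(2^m) := by
    intro v w
    have : |(-1:ℤ)^v.val * Wal m g w| = 2^m := by
      rw [abs_mul, abs_pow, abs_neg, abs_one, one_pow, one_mul, hW w]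
    exact (abs_eq (by positivity)).mp this
  have hpos : (0:ℤ) < 2^m := by positivity
  have step : ∀ w : F, ((2:ℤ)^m - A w) * ((2:ℤ)^m - B w)
      = if (A w = -(2^m) ∧ B w = -(2^m)) then 2^(2*m+2) else 0 := by
    intro w
    have e : (2:ℤ)^(2*m+2) = 4 * (2^m * 2^m) := by
      rw [two_mul, pow_add, pow_add]; ring
    by_cases hA1 : A w = -(2^m)
    · by_cases hB1 : B w = -(2^m)
      · rw [if_pos ⟨hA1, hB1⟩, hA1, hB1, e]; ring
      · rw [if_neg (fun h => hB1 h.2)]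
        rcases habs (g y + tr m (w*y)) w with h2 | h2
        · have hBw : B w = 2^m := h2
          rw [hBw]; ring
        · exact absurd h2 hB1
    · rw [if_neg (fun h => hA1 h.1)]
      rcases habs (g x + tr m (w*x)) w with h1 | h1
      · have hAw : A w = 2^m := h1
        rw [hAw]; ring
      · exact absurd h1 hA1
  have hsum1 : ∑ w : F, ((2:ℤ)^m - A w) * ((2:ℤ)^m - B w)
      = ((Finset.univ.filter (fun w : F => A w = -(2^m) ∧ B w = -(2^m))).card : ℤ) * 2^(2*m+2) := by
    rw [Fintype.sum_congr _ _ step, ← Finset.sum_filter, Finset.sum_const, nsmul_eq_mul]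
  have hsumA : ∑ w : F, A w = 2^(2*m) := sum_W_mul (by omega) g x
  have hsumB : ∑ w : F, B w = 2^(2*m) := sum_W_mul (by omega) g y
  have hsumAB : ∑ w : F, A w * B w = 0 := sum_WW g hxy hW
  have hexp : ∑ w : F, ((2:ℤ)^m - A w) * ((2:ℤ)^m - B w)
      = (Fintype.card F : ℤ) * (2^m * 2^m) - 2^m * (∑ w : F, B w) - (∑ w : F, A w) * 2^m
        + ∑ w : F, A w * B w := by
    rw [Fintype.sum_congr _ _ (fun w => by ring :
      ∀ w : F, ((2:ℤ)^m - A w) * ((2:ℤ)^m - B w)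
        = 2^m * 2^m - 2^m * B w - A w * 2^m + A w * B w)]
    rw [Finset.sum_add_distrib, Finset.sum_sub_distrib, Finset.sum_sub_distrib,
      Finset.sum_const, ← Finset.mul_sum, ← Finset.sum_mul, nsmul_eq_mul, Finset.card_univ]
  have hcards : (((Finset.univ.filter (fun w : F => A w = -(2^m) ∧ B w = -(2^m))).card : ℤ))
        * 2^(2*m+2)
      = (2^(2*m):ℤ) * (2^m * 2^m) - 2^m * 2^(2*m) - 2^(2*m) * 2^m := by
    rw [← hsum1, hexp, hsumA, hsumB, hsumAB, cardF (by omega)]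
    push_cast; ring
  have hval : (((2:ℕ)^(2*m-2) - 2^(m-1) : ℕ) : ℤ) * 2^(2*m+2)
      = (2^(2*m):ℤ) * (2^m * 2^m) - 2^m * 2^(2*m) - 2^(2*m) * 2^m := by
    obtain ⟨k, hk⟩ : ∃ k, m = k + 2 := ⟨m - 2, by omega⟩
    subst hk
    have e1 : 2*(k+2)-2 = 2*k+2 := by omega
    have e2 : (k+2)-1 = k+1 := by omega
    rw [e1, e2]
    have hle : (2:ℕ)^(k+1) ≤ 2^(2*k+2) := Nat.pow_le_pow_right (by norm_num) (by omega)
    push_cast [Nat.cast_sub hle]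
    ring
  have hfin := mul_right_cancel₀ (b := (2:ℤ)^(2*m+2)) (by positivity)
    (hcards.trans hval.symm)
  exact_mod_cast hfin


lemma sgn_one : ((-1:ℤ))^((1 : ZMod 2)).val = -1 := by decide
lemma sgn_zero : ((-1:ℤ))^((0 : ZMod 2)).val = 1 := by decide
lemma sgn_or : ∀ v : ZMod 2, (-1:ℤ)^v.val = 1 ∨ (-1:ℤ)^v.val = -1 := by decide

open scoped Classical in
lemma count_zero (hm : 2 ≤ m) (f : Fin ℓ → F → ZMod 2) (w : F) (ε : ZMod 2) :
    wt m (Phi m ℓ f (0, w, ε)) ≠ 2^(2*m-1) - 2^(m-1) := by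
  intro hwt
  rw [wt_eq_iff (by omega)] at hwt
  have hphi : ∀ z : F, Phi m ℓ f ((0 : Fin ℓ → ZMod 2), w, ε) z = tr m (w * z) + ε := by
    intro z; simp [Phi]
  rw [Fintype.sum_congr _ _ (fun z => by rw [hphi z]),
    sum_sgn_add_const (fun z => tr m (w * z)) ε, char_sum' (by omega) w] at hwt
  have hpos : (0:ℤ) < 2^m := by positivity
  have hlt : (2:ℤ)^m < 2^(2*m) := by
    apply pow_lt_pow_right₀ (by norm_num)
    omega
  split_ifs at hwt with hw
  · rcases sgn_or ε with h | h <;> rw [h] at hwt <;> omega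
  · rw [zero_mul] at hwt
    omega

open scoped Classical in
lemma count_pairs (hm : 2 ≤ m) {f : Fin ℓ → F → ZMod 2} (hf : IsBentVectorial m ℓ f)
    (a : Fin ℓ → ZMod 2) (ha : a ≠ 0) {x y : F} (hxy : x ≠ y) :
    (Finset.univ.filter (fun q : F × ZMod 2 =>
       wt m (Phi m ℓ f (a, q)) = 2^(2*m-1) - 2^(m-1) ∧
       Phi m ℓ f (a, q) x = 1 ∧ Phi m ℓ f (a, q) y = 1)).card
      = 2^(2*m-2) - 2^(m-1) := by
  set g : F → ZMod 2 := fun z => ∑ j, a j * f j z with hg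
  have hW : ∀ w : F, |Wal m g w| = 2^m := hf a ha
  have hpos : (0:ℤ) < 2^m := by positivity
  have hW2 : ∀ w : F, Wal m g w * Wal m g w = 2^(2*m) := by
    intro w
    have h1 : |Wal m g w| * |Wal m g w| = 2^m * 2^m := by rw [hW w]
    rw [abs_mul_abs_self] at h1
    rw [h1, ← pow_add, two_mul]
  have hphi : ∀ (w : F) (ε : ZMod 2) (z : F),
      Phi m ℓ f (a, w, ε) z = (g z + tr m (w * z)) + ε := fun w ε z => rfl
  -- weight condition in terms of the Walsh transform
  have keywt : ∀ (w : F) (ε : ZMod 2),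
      (wt m (Phi m ℓ f (a, w, ε)) = 2^(2*m-1) - 2^(m-1)) ↔
        ((-1:ℤ)^(ε.val) * Wal m g w = 2^m) := by
    intro w ε
    rw [wt_eq_iff (by omega)]
    rw [Fintype.sum_congr _ _ (fun z => by rw [hphi w ε z]),
      sum_sgn_add_const (fun z => g z + tr m (w * z)) ε]
    rw [mul_comm]
    rfl
  -- value conditions
  have keyval : ∀ (u w : F) (ε : ZMod 2),
      (-1:ℤ)^(ε.val) * Wal m g w = 2^m →
      ((g u + tr m (w * u) + ε = 1) ↔
        (-1:ℤ)^((g u + tr m (w*u)).val) * Wal m g w = -(2^m)) := by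
    intro u w ε hwt
    have e1 : (-1:ℤ)^((g u + tr m (w*u) + ε).val)
        = (-1)^((g u + tr m (w*u)).val) * (-1)^(ε.val) := sgn_add _ _
    constructor
    · intro h
      rw [h, sgn_one] at e1
      linear_combination ((-1:ℤ)^((g u + tr m (w*u)).val) * (-1)^(ε.val)) * hwt
        - ((-1:ℤ)^((g u + tr m (w*u)).val) * Wal m g w) * (sgn_sq ε) + (2:ℤ)^m * e1.symm
    · intro h
      have h3 : ((-1:ℤ)^((g u + tr m (w*u)).val) * (-1)^(ε.val)) * (2^(2*m))
          = (-1) * (2^(2*m)) := by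
        linear_combination ((-1:ℤ)^(ε.val) * Wal m g w) * h - (2:ℤ)^m * hwt
          - ((-1:ℤ)^((g u + tr m (w*u)).val) * (-1)^(ε.val)) * (hW2 w)
      have h4 := mul_right_cancel₀ (by positivity : ((2:ℤ)^(2*m)) ≠ 0) h3
      rw [h4] at e1
      exact (sgn_eq_neg_one_iff _).mp e1
  -- the choice of epsilon
  set E : F → ZMod 2 := fun w => if Wal m g w = 2^m then 0 else 1 with hE
  have keyfilter : Finset.univ.filter (fun q : F × ZMod 2 =>
       wt m (Phi m ℓ f (a, q)) = 2^(2*m-1) - 2^(m-1) ∧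
       Phi m ℓ f (a, q) x = 1 ∧ Phi m ℓ f (a, q) y = 1)
      = (Finset.univ.filter (fun w : F =>
         (-1:ℤ)^((g x + tr m (w*x)).val) * Wal m g w = -(2^m) ∧
         (-1:ℤ)^((g y + tr m (w*y)).val) * Wal m g w = -(2^m))).image (fun w => (w, E w)) := by
    ext ⟨w, ε⟩
    simp only [Finset.mem_filter, Finset.mem_univ, true_and, Finset.mem_image]
    constructor
    · rintro ⟨h1, h2, h3⟩
      rw [keywt] at h1
      rw [hphi w ε x] at h2
      rw [hphi w ε y] at h3
      refine ⟨w, ⟨(keyval x w ε h1).mp h2, (keyval y w ε h1).mp h3⟩, ?_⟩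
      have hε : E w = ε := by
        rcases (abs_eq hpos.le).mp (hW w) with hw | hw
        · rw [hE]
          simp only [if_pos hw]
          rw [hw] at h1
          have h5 : (-1:ℤ)^ε.val = 1 := mul_right_cancel₀ (ne_of_gt hpos)
            (h1.trans (one_mul _).symm)
          exact ((sgn_eq_one_iff ε).mp h5).symm
        · rw [hE]
          have hne : Wal m g w ≠ 2^m := by rw [hw]; intro hc; omega
          simp only [if_neg hne]
          rw [hw] at h1
          have h6 : (-1:ℤ) * (-(2^m)) = 2^m := by ring
          have h5 : (-1:ℤ)^ε.val = -1 := mul_right_cancel₀ (by intro hc; omega : (-(2:ℤ)^m) ≠ 0)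
            (h1.trans h6.symm)
          exact ((sgn_eq_neg_one_iff ε).mp h5).symm
      rw [hε]
    · rintro ⟨w', ⟨hT1, hT2⟩, heq⟩
      rw [Prod.mk.injEq] at heq
      obtain ⟨rfl, rfl⟩ := heq
      have h1 : (-1:ℤ)^((E w').val) * Wal m g w' = 2^m := by
        rcases (abs_eq hpos.le).mp (hW w') with hw | hw
        · rw [hE]; simp only [if_pos hw]
          rw [sgn_zero, hw, one_mul]
        · have hne : Wal m g w' ≠ 2^m := by rw [hw]; intro hc; omega
          rw [hE]; simp only [if_neg hne]
          rw [sgn_one, hw]; ring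
      refine ⟨(keywt w' _).mpr h1, ?_, ?_⟩
      · rw [hphi w' _ x]
        exact (keyval x w' _ h1).mpr hT1
      · rw [hphi w' _ y]
        exact (keyval y w' _ h1).mpr hT2
  rw [keyfilter, Finset.card_image_of_injective _
    (fun u v huv => congrArg Prod.fst huv : Function.Injective (fun w : F => (w, E w)))]
  exact count_T hm g hW hxy

end Aux

/-- the minimum weight codewords of `C(f_1, …, f_ℓ)` hold a
`2-(2^(2m), 2^(2m-1) - 2^(m-1), (2^ℓ-1)(2^(2m-2) - 2^(m-1)))` design. -/
theorem stmt_1 (m ℓ : ℕ) (hm : 2 ≤ m) (hℓ1 : 1 ≤ ℓ) (hℓm : ℓ ≤ m)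
    (f : Fin ℓ → GaloisField 2 (2*m) → ZMod 2) (hf : IsBentVectorial m ℓ f) :
    ∀ x y : GaloisField 2 (2*m), x ≠ y →
      {c | c ∈ code m ℓ f ∧ wt m c = 2^(2*m-1) - 2^(m-1) ∧ c x = 1 ∧ c y = 1}.ncard =
        (2^ℓ - 1) * (2^(2*m-2) - 2^(m-1)) := by
  classical
  intro x y hxy
  have hinj := Phi_injective (by omega : 1 ≤ m) hf
  have hset : {c | c ∈ code m ℓ f ∧ wt m c = 2^(2*m-1) - 2^(m-1) ∧ c x = 1 ∧ c y = 1}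
      = Phi m ℓ f '' {p | wt m (Phi m ℓ f p) = 2^(2*m-1) - 2^(m-1) ∧
          Phi m ℓ f p x = 1 ∧ Phi m ℓ f p y = 1} := by
    ext c
    constructor
    · rintro ⟨hc, h1, h2, h3⟩
      obtain ⟨p, rfl⟩ := (mem_code_iff f c).mp hc
      exact ⟨p, ⟨h1, h2, h3⟩, rfl⟩
    · rintro ⟨p, ⟨h1, h2, h3⟩, rfl⟩
      exact ⟨Phi_mem f p, h1, h2, h3⟩
  rw [hset, Set.ncard_image_of_injective _ hinj]
  have hset2 : {p | wt m (Phi m ℓ f p) = 2^(2*m-1) - 2^(m-1) ∧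
          Phi m ℓ f p x = 1 ∧ Phi m ℓ f p y = 1}
      = ↑(Finset.univ.filter (fun p : (Fin ℓ → ZMod 2) × GaloisField 2 (2*m) × ZMod 2 =>
          wt m (Phi m ℓ f p) = 2^(2*m-1) - 2^(m-1) ∧
          Phi m ℓ f p x = 1 ∧ Phi m ℓ f p y = 1)) := by
    ext p
    simp
  rw [hset2, Set.ncard_coe_finset]
  rw [Finset.card_filter, Fintype.sum_prod_type]
  have inner : ∀ a : Fin ℓ → ZMod 2,
      (∑ q : GaloisField 2 (2*m) × ZMod 2,
        if (wt m (Phi m ℓ f (a, q)) = 2^(2*m-1) - 2^(m-1) ∧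
          Phi m ℓ f (a, q) x = 1 ∧ Phi m ℓ f (a, q) y = 1) then 1 else 0)
        = if a = 0 then 0 else 2^(2*m-2) - 2^(m-1) := by
    intro a
    rw [← Finset.card_filter]
    split_ifs with ha
    · subst ha
      apply Finset.card_eq_zero.mpr
      rw [Finset.filter_eq_empty_iff]
      rintro ⟨w, ε⟩ _
      rintro ⟨h1, _, _⟩
      exact count_zero hm f w ε h1
    · exact count_pairs hm hf a ha hxy
  rw [Finset.sum_congr rfl (fun a _ => inner a)]
  rw [← Finset.add_sum_erase _ _ (Finset.mem_univ (0 : Fin ℓ → ZMod 2))]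
  rw [if_pos rfl, zero_add]
  rw [Finset.sum_congr rfl
    (fun a haa => if_neg (Finset.ne_of_mem_erase haa))]
  rw [Finset.sum_const, Finset.card_erase_of_mem (Finset.mem_univ _), Finset.card_univ]
  rw [Fintype.card_fun, smul_eq_mul]
  congr 2
  simp
end
end
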